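/- Let F be the Minkowski gauge of a compact convex body K ⊂ ℝⁿ with 0 in its interior, with F of class C¹ on ℝⁿ∖{0}, and assume the Legendre map ℓ is a homeomorphism of ℝⁿ onto (ℝⁿ)*. Let p > 1, let μ be a compactly supported Borel probability measure, and let a ↦ x(a) be a C¹ path solving x′(a) = ℓ⁻¹(−D E_{μ,p}(x(a))). Then for every a, (d/da) E_{μ,p}(x(a)) = −F*(−D E_{μ,p}(x(a)))²; in particular a ↦ E_{μ,p}(x(a)) is nonincreasing, strictly decreasing while D E_{μ,p}(x(a)) ≠ 0. -/

import Mathlib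

open MeasureTheory Filter Set Metric Asymptotics

open MeasureTheory Filter Set Metric Asymptotics

variable {n : ℕ}

/-- Euler identity for 1-homogeneous differentiable functions. -/
lemma pmgf_euler {F : EuclideanSpace ℝ (Fin n) → ℝ} {v : EuclideanSpace ℝ (Fin n)}
    (hdiff : DifferentiableAt ℝ F v)
    (hsmul : ∀ t : ℝ, 0 ≤ t → ∀ w, F (t • w) = t * F w) :
    fderiv ℝ F v v = F v := by
  have hinner : HasDerivAt (fun t : ℝ => t • v) ((1:ℝ) • v) 1 :=
    (hasDerivAt_id (1:ℝ)).smul_const v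
  have hdiff' : HasFDerivAt F (fderiv ℝ F v) ((1:ℝ) • v) := by
    rw [one_smul]; exact hdiff.hasFDerivAt
  have h1 : HasDerivAt (fun t : ℝ => F (t • v)) (fderiv ℝ F v ((1:ℝ) • v)) 1 :=
    hdiff'.comp_hasDerivAt 1 hinner
  have h2 : (fun t : ℝ => t * F v) =ᶠ[nhds (1:ℝ)] fun t => F (t • v) := by
    filter_upwards [eventually_gt_nhds (by norm_num : (0:ℝ) < 1)] with t ht
    rw [hsmul t ht.le]
  have h3 : HasDerivAt (fun t : ℝ => t * F v) (fderiv ℝ F v ((1:ℝ) • v)) 1 :=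
    h1.congr_of_eventuallyEq h2
  have h4 : HasDerivAt (fun t : ℝ => t * F v) (F v) 1 := hasDerivAt_mul_const (F v)
  have := h4.unique h3
  rw [one_smul] at this
  exact this.symm

/-- Subgradient inequality: for convex-type (subadditive + homogeneous) F,
the derivative is dominated by F. -/
lemma pmgf_subgrad {F : EuclideanSpace ℝ (Fin n) → ℝ} {v y : EuclideanSpace ℝ (Fin n)}
    (hdiff : DifferentiableAt ℝ F v)
    (hsmul : ∀ t : ℝ, 0 ≤ t → ∀ w, F (t • w) = t * F w)
    (hadd : ∀ x y, F (x + y) ≤ F x + F y) :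
    fderiv ℝ F v y ≤ F y := by
  have hinner : HasDerivAt (fun t : ℝ => v + t • y) ((1:ℝ) • y) 0 := by
    have h := (hasDerivAt_const (0:ℝ) v).add ((hasDerivAt_id (0:ℝ)).smul_const y)
    rw [zero_add] at h; exact h
  have hdiff' : HasFDerivAt F (fderiv ℝ F v) (v + (0:ℝ) • y) := by
    rw [zero_smul, add_zero]; exact hdiff.hasFDerivAt
  have h1 : HasDerivAt (fun t : ℝ => F (v + t • y)) (fderiv ℝ F v ((1:ℝ) • y)) 0 :=
    hdiff'.comp_hasDerivAt 0 hinner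
  rw [one_smul] at h1
  have hslope : Tendsto (slope (fun t : ℝ => F (v + t • y)) 0) (nhdsWithin 0 (Ioi 0))
      (nhds (fderiv ℝ F v y)) :=
    (hasDerivAt_iff_tendsto_slope.1 h1).mono_left
      (nhdsWithin_mono 0 (fun t ht => ne_of_gt ht))
  refine le_of_tendsto hslope ?_
  filter_upwards [self_mem_nhdsWithin] with t (ht : 0 < t)
  have hb : F (v + t • y) ≤ F v + t * F y := by
    calc F (v + t • y) ≤ F v + F (t • y) := hadd _ _
    _ = F v + t * F y := by rw [hsmul t ht.le]
  rw [slope_def_field]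
  have : (F (v + t • y) - F (v + (0:ℝ) • y)) / (t - 0) ≤ F y := by
    rw [zero_smul, add_zero, sub_zero, div_le_iff₀ ht]
    linarith
  simpa [div_eq_inv_mul] using this

/-- The derivative of a 1-homogeneous function is 0-homogeneous. -/
lemma pmgf_fderiv_homog {F : EuclideanSpace ℝ (Fin n) → ℝ} {v : EuclideanSpace ℝ (Fin n)}
    {t : ℝ} (ht : 0 < t)
    (hdiffv : DifferentiableAt ℝ F v) (hdifftv : DifferentiableAt ℝ F (t • v))
    (hsmul : ∀ s : ℝ, 0 ≤ s → ∀ w, F (s • w) = s * F w) :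
    fderiv ℝ F (t • v) = fderiv ℝ F v := by
  have hinner : HasFDerivAt (fun w : EuclideanSpace ℝ (Fin n) => t • w)
      (t • ContinuousLinearMap.id ℝ (EuclideanSpace ℝ (Fin n))) v :=
    (hasFDerivAt_id v).const_smul t
  have h1 : HasFDerivAt (fun w => F (t • w))
      ((fderiv ℝ F (t • v)).comp (t • ContinuousLinearMap.id ℝ (EuclideanSpace ℝ (Fin n)))) v :=
    hdifftv.hasFDerivAt.comp v hinner
  have h2 : HasFDerivAt (fun w => t * F w) (t • fderiv ℝ F v) v :=
    hdiffv.hasFDerivAt.const_smul t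
  have heq : (fun w => F (t • w)) = fun w => t * F w := by
    funext w; exact hsmul t ht.le w
  rw [heq] at h1
  have h3 := h2.unique h1
  have h4 : (fderiv ℝ F (t • v)).comp (t • ContinuousLinearMap.id ℝ (EuclideanSpace ℝ (Fin n)))
      = t • fderiv ℝ F (t • v) := by
    ext y; simp
  rw [h4] at h3
  exact smul_right_injective _ (ne_of_gt ht) h3.symm


lemma pmgf_rpow_tendsto {q : ℝ} (hq : 0 < q) :
    Tendsto (fun v : EuclideanSpace ℝ (Fin n) => ‖v‖ ^ q) (nhds 0) (nhds 0) := by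
  have h1 : ContinuousAt (fun t : ℝ => t ^ q) 0 :=
    Real.continuousAt_rpow_const 0 q (Or.inr hq.le)
  have h2 : Tendsto (fun v : EuclideanSpace ℝ (Fin n) => ‖v‖) (nhds 0) (nhds 0) :=
    tendsto_norm_zero
  have := h1.tendsto.comp h2
  rwa [Real.zero_rpow (ne_of_gt hq)] at this

lemma pmgf_rpow_split {p : ℝ} (hp : 1 < p) (x : ℝ) (hx : 0 ≤ x) :
    x ^ p = x ^ (p - 1) * x := by
  have h := Real.rpow_add' hx (show (p - 1) + 1 ≠ 0 by intro h; linarith)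
  rw [sub_add_cancel] at h
  rw [h, Real.rpow_one]

/-- `F^p` has derivative `0` at `0`. -/
lemma pmgf_deriv0 {F : EuclideanSpace ℝ (Fin n) → ℝ} {C p : ℝ} (hp : 1 < p) (hC : 0 ≤ C)
    (hF0 : F 0 = 0) (hFnn : ∀ v, 0 ≤ F v) (hub : ∀ v, F v ≤ C * ‖v‖) :
    HasFDerivAt (fun v => F v ^ p)
      (0 : EuclideanSpace ℝ (Fin n) →L[ℝ] ℝ) 0 := by
  rw [hasFDerivAt_iff_isLittleO_nhds_zero]
  have h1 : (fun h : EuclideanSpace ℝ (Fin n) => F h ^ p)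
      =O[nhds 0] fun h => ‖h‖ ^ (p - 1) * ‖h‖ := by
    refine IsBigO.of_bound (C ^ p) (Eventually.of_forall fun h => ?_)
    have hFle : F h ^ p ≤ (C * ‖h‖) ^ p :=
      Real.rpow_le_rpow (hFnn h) (hub h) (by linarith)
    have hsplit : (C * ‖h‖) ^ p = C ^ p * (‖h‖ ^ (p - 1) * ‖h‖) := by
      rw [Real.mul_rpow hC (norm_nonneg h), pmgf_rpow_split hp ‖h‖ (norm_nonneg h)]
    rw [Real.norm_eq_abs, abs_of_nonneg (Real.rpow_nonneg (hFnn h) p),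
      Real.norm_eq_abs, abs_of_nonneg (by positivity)]
    calc F h ^ p ≤ (C * ‖h‖) ^ p := hFle
    _ = C ^ p * (‖h‖ ^ (p - 1) * ‖h‖) := hsplit
  have ha : (fun h : EuclideanSpace ℝ (Fin n) => ‖h‖ ^ (p - 1))
      =o[nhds 0] (fun _ => (1 : ℝ)) :=
    (isLittleO_one_iff ℝ).2 (pmgf_rpow_tendsto (by linarith))
  have h2 : (fun h : EuclideanSpace ℝ (Fin n) => ‖h‖ ^ (p - 1) * ‖h‖)
      =o[nhds 0] fun h : EuclideanSpace ℝ (Fin n) => (1 : ℝ) * ‖h‖ :=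
    ha.mul_isBigO (isBigO_refl _ _)
  simp only [one_mul] at h2
  have h2' : (fun h : EuclideanSpace ℝ (Fin n) => ‖h‖ ^ (p - 1) * ‖h‖)
      =o[nhds 0] fun h : EuclideanSpace ℝ (Fin n) => h := isLittleO_norm_right.1 h2
  have hkey := h1.trans_isLittleO h2'
  simpa [hF0, Real.zero_rpow (ne_of_gt (by linarith : (0:ℝ) < p))] using hkey



lemma pmgf_E_diff {F : EuclideanSpace ℝ (Fin n) → ℝ} {C M p : ℝ}
    (hp : 1 < p) (hC : 0 < C) (hM : 0 ≤ M)
    (hFc : Continuous F) (hF0 : F 0 = 0) (hFnn : ∀ v, 0 ≤ F v)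
    (hub : ∀ v, F v ≤ C * ‖v‖)
    (hFd : ∀ v : EuclideanSpace ℝ (Fin n), v ≠ 0 → DifferentiableAt ℝ F v)
    (hDFc : ContinuousOn (fderiv ℝ F) {(0 : EuclideanSpace ℝ (Fin n))}ᶜ)
    (hMb : ∀ v : EuclideanSpace ℝ (Fin n), v ≠ 0 → ‖fderiv ℝ F v‖ ≤ M)
    (hderiv0 : HasFDerivAt (fun v => F v ^ p)
      (0 : EuclideanSpace ℝ (Fin n) →L[ℝ] ℝ) 0)
    (μ : Measure (EuclideanSpace ℝ (Fin n))) [IsProbabilityMeasure μ]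
    {s : Set (EuclideanSpace ℝ (Fin n))} (hs : IsCompact s) (hμs : μ sᶜ = 0)
    (x₀ : EuclideanSpace ℝ (Fin n)) :
    DifferentiableAt ℝ (fun x => ∫ z, F (z - x) ^ p ∂μ) x₀ := by
  have hp0 : (0:ℝ) < p := by linarith
  have hp1 : (0:ℝ) < p - 1 := by linarith
  set f' : EuclideanSpace ℝ (Fin n) → (EuclideanSpace ℝ (Fin n) →L[ℝ] ℝ) :=
    fun v => (p * F v ^ (p - 1)) • fderiv ℝ F v with hf'def
  have f'0 : f' 0 = 0 := by
    simp [hf'def, hF0, Real.zero_rpow (ne_of_gt hp1)]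
  have houter : ∀ w, HasFDerivAt (fun v => F v ^ p) (f' w) w := by
    intro w
    by_cases hw : w = 0
    · subst hw; rw [f'0]; exact hderiv0
    · exact ((hFd w hw).hasFDerivAt).rpow_const (Or.inr hp.le)
  have hA2 : ∀ v, ‖f' v‖ ≤ p * C ^ (p - 1) * M * ‖v‖ ^ (p - 1) := by
    intro v
    by_cases hv : v = 0
    · rw [hv, f'0]; simp; positivity
    · show ‖(p * F v ^ (p - 1)) • fderiv ℝ F v‖ ≤ _
      rw [norm_smul, Real.norm_eq_abs,
        abs_of_nonneg (mul_nonneg hp0.le (Real.rpow_nonneg (hFnn v) _))]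
      have h1 : F v ^ (p - 1) ≤ (C * ‖v‖) ^ (p - 1) :=
        Real.rpow_le_rpow (hFnn v) (hub v) hp1.le
      have h2 : ‖fderiv ℝ F v‖ ≤ M := hMb v hv
      calc p * F v ^ (p - 1) * ‖fderiv ℝ F v‖
          ≤ p * (C * ‖v‖) ^ (p - 1) * M := by
            apply mul_le_mul (mul_le_mul_of_nonneg_left h1 hp0.le) h2
              (norm_nonneg _) (by positivity)
        _ = p * C ^ (p - 1) * M * ‖v‖ ^ (p - 1) := by
            rw [Real.mul_rpow hC.le (norm_nonneg v)]; ring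
  have hf'c : Continuous f' := by
    have hcon : ContinuousOn f' {(0 : EuclideanSpace ℝ (Fin n))}ᶜ :=
      (continuousOn_const.mul
        ((hFc.rpow_const (fun x => Or.inr hp1.le)).continuousOn)).smul hDFc
    have htend : Tendsto (fun v : EuclideanSpace ℝ (Fin n) =>
        p * C ^ (p - 1) * M * ‖v‖ ^ (p - 1)) (nhds 0) (nhds 0) := by
      have := (pmgf_rpow_tendsto (n := n) hp1).const_mul (p * C ^ (p - 1) * M)
      simpa using this
    have h0 : ContinuousAt f' 0 := by
      rw [ContinuousAt, f'0]
      exact squeeze_zero_norm hA2 htend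
    rw [continuous_iff_continuousAt]
    intro v
    by_cases hv : v = 0
    · rw [hv]; exact h0
    · exact hcon.continuousAt (isOpen_compl_singleton.mem_nhds hv)
  -- setup bounds from the compact support
  obtain ⟨R₀, hR₀⟩ := hs.isBounded.subset_closedBall 0
  set R : ℝ := |R₀| + ‖x₀‖ + 1 with hRdef
  have hRpos : 0 < R := by positivity
  have hzs : ∀ z ∈ s, ∀ x ∈ ball x₀ 1, ‖z - x‖ ≤ R := by
    intro z hz x hx
    have h1 : ‖z‖ ≤ R₀ := by simpa [mem_closedBall_zero_iff] using hR₀ hz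
    have h2 : ‖x - x₀‖ < 1 := by simpa [mem_ball, dist_eq_norm] using hx
    have h3 : ‖x‖ ≤ ‖x - x₀‖ + ‖x₀‖ := (norm_le_norm_add_norm_sub' x x₀).trans_eq (add_comm _ _)
    have := norm_sub_le z x
    have := le_abs_self R₀
    rw [hRdef]; linarith
  have hae : ∀ᵐ z ∂μ, z ∈ s := by
    have : μ {z | ¬ z ∈ s} = 0 := by simpa [Set.compl_def] using hμs
    exact ae_iff.2 this
  have hcont_sub : ∀ x₁ : EuclideanSpace ℝ (Fin n),
      Continuous (fun z : EuclideanSpace ℝ (Fin n) => z - x₁) :=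
    fun x₁ => continuous_id.sub continuous_const
  have hF_meas : ∀ᶠ x in nhds x₀,
      AEStronglyMeasurable (fun z => F (z - x) ^ p) μ :=
    Eventually.of_forall fun x =>
      (((hFc.comp (hcont_sub x)).rpow_const
        (fun z => Or.inr hp0.le))).aestronglyMeasurable
  have hF_int : Integrable (fun z => F (z - x₀) ^ p) μ := by
    refine Integrable.mono' (integrable_const ((C * R) ^ p))
      (((hFc.comp (hcont_sub x₀)).rpow_const
        (fun z => Or.inr hp0.le))).aestronglyMeasurable ?_
    filter_upwards [hae] with z hz
    have hnorm : ‖z - x₀‖ ≤ R := hzs z hz x₀ (mem_ball_self one_pos)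
    rw [Real.norm_eq_abs, abs_of_nonneg (Real.rpow_nonneg (hFnn _) p)]
    exact Real.rpow_le_rpow (hFnn _)
      ((hub _).trans (mul_le_mul_of_nonneg_left hnorm hC.le)) hp0.le
  have hF'_meas : AEStronglyMeasurable (fun z => -(f' (z - x₀))) μ :=
    ((hf'c.comp (hcont_sub x₀)).neg).aestronglyMeasurable
  have h_bound : ∀ᵐ z ∂μ, ∀ x ∈ ball x₀ 1,
      ‖-(f' (z - x))‖ ≤ p * C ^ (p - 1) * M * R ^ (p - 1) := by
    filter_upwards [hae] with z hz
    intro x hx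
    rw [norm_neg]
    refine (hA2 (z - x)).trans ?_
    exact mul_le_mul_of_nonneg_left
      (Real.rpow_le_rpow (norm_nonneg _) (hzs z hz x hx) hp1.le)
      (by positivity)
  have h_diff : ∀ᵐ z ∂μ, ∀ x ∈ ball x₀ 1,
      HasFDerivAt (fun x => F (z - x) ^ p) (-(f' (z - x))) x := by
    refine Eventually.of_forall fun z => fun x _ => ?_
    have hinner : HasFDerivAt (fun x : EuclideanSpace ℝ (Fin n) => z - x)
        (-(ContinuousLinearMap.id ℝ (EuclideanSpace ℝ (Fin n)))) x :=
      (hasFDerivAt_id x).const_sub z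
    have hcomp := (houter (z - x)).comp x hinner
    have heq : (f' (z - x)).comp
        (-(ContinuousLinearMap.id ℝ (EuclideanSpace ℝ (Fin n))))
        = -(f' (z - x)) := by ext y; simp
    rwa [heq] at hcomp
  have := hasFDerivAt_integral_of_dominated_of_fderiv_le
    (F := fun x z => F (z - x) ^ p) (F' := fun x z => -(f' (z - x)))
    (bound := fun _ => p * C ^ (p - 1) * M * R ^ (p - 1))
    (ball_mem_nhds x₀ one_pos) hF_meas hF_int hF'_meas h_bound (integrable_const _) h_diff
  exact this.differentiableAt

set_option maxHeartbeats 1000000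


/-- Energy dissipation along the gradient flow in the flat Minkowski
model: if `γ` solves `γ'(a) = ℓ⁻¹(-D E_{μ,p}(γ(a)))`, then
`(d/da) E_{μ,p}(γ(a)) = -F*(-D E_{μ,p}(γ(a)))²`; in particular `a ↦ E_{μ,p}(γ(a))` is
nonincreasing, and strictly decreasing while the derivative of `E_{μ,p}` is nonzero. -/
theorem p_mean_gradient_flow_dissipation
    {n : ℕ} (K : Set (EuclideanSpace ℝ (Fin n)))
    (hK_cpt : IsCompact K) (hK_conv : Convex ℝ K)
    (hK_int : (0 : EuclideanSpace ℝ (Fin n)) ∈ interior K)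
    (F : EuclideanSpace ℝ (Fin n) → ℝ) (hF : F = gauge K)
    (hFsmooth : ContDiffOn ℝ 1 F {(0 : EuclideanSpace ℝ (Fin n))}ᶜ)
    (ℓ : EuclideanSpace ℝ (Fin n) → (EuclideanSpace ℝ (Fin n) →L[ℝ] ℝ))
    (hℓ : ∀ v, v ≠ 0 → ℓ v = (1 / 2 : ℝ) • fderiv ℝ (fun w => F w ^ 2) v)
    (hℓ0 : ℓ 0 = 0)
    (ℓinv : (EuclideanSpace ℝ (Fin n) →L[ℝ] ℝ) → EuclideanSpace ℝ (Fin n))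
    (hleft : Function.LeftInverse ℓinv ℓ) (hright : Function.RightInverse ℓinv ℓ)
    (hℓcont : Continuous ℓ) (hℓinvcont : Continuous ℓinv)
    (p : ℝ) (hp : 1 < p)
    (μ : Measure (EuclideanSpace ℝ (Fin n))) [IsProbabilityMeasure μ]
    (hcpt : ∃ s : Set (EuclideanSpace ℝ (Fin n)), IsCompact s ∧ μ sᶜ = 0)
    (E : EuclideanSpace ℝ (Fin n) → ℝ)
    (hE : E = fun x => ∫ z, F (z - x) ^ p ∂μ)
    (γ : ℝ → EuclideanSpace ℝ (Fin n))
    (hode : ∀ a : ℝ, HasDerivAt γ (ℓinv (-(fderiv ℝ E (γ a)))) a) :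
    (∀ a : ℝ, HasDerivAt (fun b => E (γ b))
        (-(sSup ((-(fderiv ℝ E (γ a))) '' {y | F y ≤ 1})) ^ 2) a) ∧
    Antitone (fun a => E (γ a)) ∧
    (∀ a b : ℝ, a < b → fderiv ℝ E (γ a) ≠ 0 → E (γ b) < E (γ a)) := by
  -- basic gauge facts
  have hKnhds : K ∈ nhds (0 : EuclideanSpace ℝ (Fin n)) :=
    mem_interior_iff_mem_nhds.1 hK_int
  have habs : Absorbent ℝ K := absorbent_nhds_zero hKnhds
  have hF0 : F 0 = 0 := by rw [hF]; exact gauge_zero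
  have hFnn : ∀ v, 0 ≤ F v := by intro v; rw [hF]; exact gauge_nonneg v
  have hsmul : ∀ t : ℝ, 0 ≤ t → ∀ w, F (t • w) = t * F w := by
    intro t ht w; rw [hF, gauge_smul_of_nonneg ht, smul_eq_mul]
  have hadd : ∀ x y, F (x + y) ≤ F x + F y := by
    intro x y; rw [hF]; exact gauge_add_le hK_conv habs x y
  have hFc : Continuous F := by rw [hF]; exact continuous_gauge hK_conv hKnhds
  -- upper bound
  obtain ⟨r, hr, hball⟩ := Metric.mem_nhds_iff.1 hKnhds
  have hCpos : (0:ℝ) < r⁻¹ := by positivity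
  have hub : ∀ v, F v ≤ r⁻¹ * ‖v‖ := by
    intro v
    rw [hF]
    have := gauge_mono (absorbent_ball_zero hr) hball v
    rwa [gauge_ball hr.le, div_eq_inv_mul] at this
  -- lower bound
  obtain ⟨R₀, hR₀K⟩ := hK_cpt.isBounded.subset_closedBall 0
  set Rk : ℝ := max R₀ 1 with hRkdef
  have hRkpos : (0:ℝ) < Rk := lt_of_lt_of_le one_pos (le_max_right _ _)
  have hKsub : K ⊆ closedBall 0 Rk :=
    hR₀K.trans (closedBall_subset_closedBall (le_max_left _ _))
  have hlb : ∀ v, ‖v‖ / Rk ≤ F v := by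
    intro v
    rw [hF]
    have := gauge_mono habs hKsub v
    rwa [gauge_closedBall hRkpos.le] at this
  have hFpos : ∀ v : EuclideanSpace ℝ (Fin n), v ≠ 0 → 0 < F v := by
    intro v hv
    exact lt_of_lt_of_le (div_pos (norm_pos_iff.2 hv) hRkpos) (hlb v)
  -- differentiability of F away from 0
  have hFd : ∀ v : EuclideanSpace ℝ (Fin n), v ≠ 0 → DifferentiableAt ℝ F v := by
    intro v hv
    exact (hFsmooth.differentiableOn one_ne_zero).differentiableAt
      (isOpen_compl_singleton.mem_nhds hv)
  have hDFc : ContinuousOn (fderiv ℝ F) {(0 : EuclideanSpace ℝ (Fin n))}ᶜ :=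
    hFsmooth.continuousOn_fderiv_of_isOpen isOpen_compl_singleton le_rfl
  -- bound on the derivative of F
  have hsphere_sub : sphere (0 : EuclideanSpace ℝ (Fin n)) 1 ⊆
      {(0 : EuclideanSpace ℝ (Fin n))}ᶜ := by
    intro x hx h0
    rw [mem_sphere_zero_iff_norm] at hx
    rw [Set.mem_singleton_iff] at h0
    rw [h0, norm_zero] at hx
    norm_num at hx
  obtain ⟨M₀, hM₀⟩ := (isCompact_sphere (0 : EuclideanSpace ℝ (Fin n)) 1
    ).exists_bound_of_continuousOn (hDFc.mono hsphere_sub)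
  set M : ℝ := max M₀ 0 with hMdef
  have hMnn : 0 ≤ M := le_max_right _ _
  have hMb : ∀ v : EuclideanSpace ℝ (Fin n), v ≠ 0 → ‖fderiv ℝ F v‖ ≤ M := by
    intro v hv
    have hnv : (0:ℝ) < ‖v‖ := norm_pos_iff.2 hv
    set w : EuclideanSpace ℝ (Fin n) := ‖v‖⁻¹ • v with hwdef
    have hwne : w ≠ 0 := smul_ne_zero (inv_ne_zero hnv.ne') hv
    have hveq : ‖v‖ • w = v := smul_inv_smul₀ hnv.ne' v
    have hwsphere : w ∈ sphere (0 : EuclideanSpace ℝ (Fin n)) 1 := by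
      rw [mem_sphere_zero_iff_norm, hwdef, norm_smul, Real.norm_eq_abs,
        abs_of_nonneg (inv_nonneg.2 hnv.le), inv_mul_cancel₀ hnv.ne']
    have hdtv : DifferentiableAt ℝ F (‖v‖ • w) := by rw [hveq]; exact hFd v hv
    have := pmgf_fderiv_homog hnv (hFd w hwne) hdtv hsmul
    rw [hveq] at this
    rw [this]
    exact (hM₀ w hwsphere).trans (le_max_left _ _)
  -- Euler identity and subgradient inequality
  have hEuler : ∀ v : EuclideanSpace ℝ (Fin n), v ≠ 0 → fderiv ℝ F v v = F v :=
    fun v hv => pmgf_euler (hFd v hv) hsmul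
  have hsubgrad : ∀ v : EuclideanSpace ℝ (Fin n), v ≠ 0 →
      ∀ y, fderiv ℝ F v y ≤ F y :=
    fun v hv y => pmgf_subgrad (hFd v hv) hsmul hadd
  -- formula for ℓ
  have hℓform : ∀ v : EuclideanSpace ℝ (Fin n), v ≠ 0 →
      ℓ v = F v • fderiv ℝ F v := by
    intro v hv
    rw [hℓ v hv]
    have hsq : HasFDerivAt (fun w => F w ^ 2)
        ((((2:ℕ):ℝ) * F v ^ (2-1)) • fderiv ℝ F v) v :=
      (hasDerivAt_pow 2 (F v)).comp_hasFDerivAt v ((hFd v hv).hasFDerivAt)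
    rw [hsq.fderiv]
    rw [smul_smul]
    congr 1
    push_cast
    ring
  -- the duality identity
  have hsup : ∀ ξ : EuclideanSpace ℝ (Fin n) →L[ℝ] ℝ, ξ ≠ 0 →
      sSup (⇑ξ '' {y | F y ≤ 1}) = F (ℓinv ξ) := by
    intro ξ hξ
    set v := ℓinv ξ with hvdef
    have hℓv : ℓ v = ξ := hright ξ
    have hvne : v ≠ 0 := by
      intro h
      apply hξ
      rw [← hℓv, h, hℓ0]
    have hξeq : ξ = F v • fderiv ℝ F v := by rw [← hℓv, hℓform v hvne]
    have hFv : 0 < F v := hFpos v hvne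
    have hgreat : IsGreatest (⇑ξ '' {y | F y ≤ 1}) (F v) := by
      constructor
      · refine ⟨(F v)⁻¹ • v, ?_, ?_⟩
        · show F ((F v)⁻¹ • v) ≤ 1
          rw [hsmul _ (inv_nonneg.2 hFv.le), inv_mul_cancel₀ hFv.ne']
        · rw [hξeq]
          simp only [ContinuousLinearMap.coe_smul', Pi.smul_apply, _root_.map_smul,
            smul_eq_mul]
          rw [hEuler v hvne]
          field_simp
      · rintro t ⟨y, hy, rfl⟩
        rw [hξeq]
        simp only [ContinuousLinearMap.coe_smul', Pi.smul_apply, smul_eq_mul]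
        have h1 : fderiv ℝ F v y ≤ 1 := (hsubgrad v hvne y).trans hy
        calc F v * fderiv ℝ F v y ≤ F v * 1 :=
              mul_le_mul_of_nonneg_left h1 hFv.le
          _ = F v := mul_one _
    exact hgreat.csSup_eq
  have hkey : ∀ ξ : EuclideanSpace ℝ (Fin n) →L[ℝ] ℝ,
      ξ (ℓinv ξ) = sSup (⇑ξ '' {y | F y ≤ 1}) ^ 2 := by
    intro ξ
    by_cases hξ : ξ = 0
    · subst hξ
      have hBne : ({y | F y ≤ 1} :
          Set (EuclideanSpace ℝ (Fin n))).Nonempty := ⟨0, by simp [hF0]⟩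
      have himg : ⇑(0 : EuclideanSpace ℝ (Fin n) →L[ℝ] ℝ) '' {y | F y ≤ 1}
          = {(0:ℝ)} := by
        have hcoe : ⇑(0 : EuclideanSpace ℝ (Fin n) →L[ℝ] ℝ)
            = fun _ : EuclideanSpace ℝ (Fin n) => (0:ℝ) := rfl
        rw [hcoe]
        exact hBne.image_const 0
      rw [himg, csSup_singleton]
      simp
    · set v := ℓinv ξ with hvdef
      have hℓv : ℓ v = ξ := hright ξ
      have hvne : v ≠ 0 := by
        intro h; apply hξ; rw [← hℓv, h, hℓ0]
      have hξeq : ξ = F v • fderiv ℝ F v := by rw [← hℓv, hℓform v hvne]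
      have h2 : ξ v = F v * F v := by
        conv_lhs => rw [hξeq]
        simp only [ContinuousLinearMap.coe_smul', Pi.smul_apply, smul_eq_mul]
        rw [hEuler v hvne]
      rw [hsup ξ hξ]
      show ξ v = F v ^ 2
      rw [h2]
      ring
  -- differentiability of E
  obtain ⟨s, hs, hμs⟩ := hcpt
  have hderiv0 : HasFDerivAt (fun v => F v ^ p)
      (0 : EuclideanSpace ℝ (Fin n) →L[ℝ] ℝ) 0 :=
    pmgf_deriv0 hp hCpos.le hF0 hFnn hub
  have hEdiff : ∀ x, DifferentiableAt ℝ E x := by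
    intro x
    rw [hE]
    exact pmgf_E_diff hp hCpos hMnn hFc hF0 hFnn hub hFd hDFc hMb hderiv0 μ hs hμs x
  -- main derivative computation
  have hmain : ∀ a : ℝ, HasDerivAt (fun b => E (γ b))
      (-(sSup ((-(fderiv ℝ E (γ a))) '' {y | F y ≤ 1})) ^ 2) a := by
    intro a
    have hc := ((hEdiff (γ a)).hasFDerivAt).comp_hasDerivAt a (hode a)
    have h1 : (fderiv ℝ E (γ a)) (ℓinv (-(fderiv ℝ E (γ a))))
        = -((-(fderiv ℝ E (γ a))) (ℓinv (-(fderiv ℝ E (γ a))))) := by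
      simp
    rw [h1, hkey (-(fderiv ℝ E (γ a)))] at hc
    exact hc
  refine ⟨hmain, ?_, ?_⟩
  · -- antitone
    have hdiff : Differentiable ℝ (fun a => E (γ a)) :=
      fun a => (hmain a).differentiableAt
    refine antitone_of_deriv_nonpos hdiff ?_
    intro a
    rw [(hmain a).deriv]
    have := sq_nonneg (sSup ((-(fderiv ℝ E (γ a))) '' {y | F y ≤ 1}))
    nlinarith
  · -- strict decrease
    intro a b hab hne
    have hdiff : Differentiable ℝ (fun a => E (γ a)) :=
      fun a => (hmain a).differentiableAt
    have hanti : Antitone (fun a => E (γ a)) := by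
      refine antitone_of_deriv_nonpos hdiff ?_
      intro a
      rw [(hmain a).deriv]
      have := sq_nonneg (sSup ((-(fderiv ℝ E (γ a))) '' {y | F y ≤ 1}))
      nlinarith
    set ξ := -(fderiv ℝ E (γ a)) with hξdef
    have hξne : ξ ≠ 0 := by
      rw [hξdef]; exact neg_ne_zero.2 hne
    have hvne : ℓinv ξ ≠ 0 := by
      intro h
      apply hξne
      rw [← hright ξ, h, hℓ0]
    have hneg : (-(sSup (⇑ξ '' {y | F y ≤ 1})) ^ 2 : ℝ) < 0 := by
      rw [hsup ξ hξne]
      have := hFpos _ hvne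
      nlinarith
    have hslope : Tendsto (slope (fun b => E (γ b)) a) (nhdsWithin a {a}ᶜ)
        (nhds (-(sSup (⇑ξ '' {y | F y ≤ 1})) ^ 2)) :=
      hasDerivAt_iff_tendsto_slope.1 (hmain a)
    have hslope' : Tendsto (slope (fun b => E (γ b)) a) (nhdsWithin a (Ioi a))
        (nhds (-(sSup (⇑ξ '' {y | F y ≤ 1})) ^ 2)) :=
      hslope.mono_left (nhdsWithin_mono a (fun t ht => ne_of_gt ht))
    have hev1 : ∀ᶠ t in nhdsWithin a (Ioi a),
        slope (fun b => E (γ b)) a t < 0 :=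
      hslope'.eventually_lt_const hneg
    have hev2 : Ioo a b ∈ nhdsWithin a (Ioi a) :=
      Ioo_mem_nhdsGT_of_mem ⟨le_refl a, hab⟩
    obtain ⟨t, hts, htIoo⟩ := (hev1.and (eventually_mem_set.2 hev2)).exists
    have hta : a < t := htIoo.1
    have h1 : E (γ t) - E (γ a) < 0 := by
      have h' := mul_neg_of_neg_of_pos hts (sub_pos.2 hta)
      rw [slope_def_field, div_mul_cancel₀ _ (sub_pos.2 hta).ne'] at h'
      exact h'
    have h2 : E (γ b) ≤ E (γ t) := hanti htIoo.2.le
    linarith
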